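/- For an n-vertex connected graph G, ρ(A_κ̄(G)) ≤ 4α'(G)/n, where α'(G) is the matching number; equality holds only when G is a complete graph on an odd number of vertices. -/

import Mathlib

open Finset

namespace AvgConn

variable {V : Type*} [Fintype V] [DecidableEq V]

/-- There exist `k` pairwise internally disjoint paths from `u` to `v` in `G`. -/
def InternallyDisjointPaths (G : SimpleGraph V) (u v : V) (k : ℕ) : Prop :=
  ∃ p : Fin k → G.Walk u v, Function.Injective p ∧ (∀ i, (p i).IsPath) ∧
    ∀ i j, i ≠ j → ∀ w, w ∈ (p i).support → w ∈ (p j).support → w = u ∨ w = v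

/-- Local connectivity `κ(u,v)`: the maximum number of internally disjoint `u,v`-paths,
with the convention `κ(v,v) = 0`. -/
noncomputable def localConn (G : SimpleGraph V) (u v : V) : ℕ :=
  if u = v then 0 else sSup {k | InternallyDisjointPaths G u v k}

/-- Vertex connectivity `κ(G)`: minimum number of vertices whose deletion leaves a
disconnected or trivial graph. -/
noncomputable def vertexConnectivity (G : SimpleGraph V) : ℕ :=
  sInf {k | ∃ S : Finset V, S.card = k ∧
    (¬ (G.induce ((Sᶜ : Finset V) : Set V)).Connected ∨ (Sᶜ : Finset V).card ≤ 1)}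

/-- The average connectivity matrix: `(u,v)`-entry `κ(u,v) / C(n,2)`. -/
noncomputable def avgConnMatrix (G : SimpleGraph V) : Matrix V V ℝ :=
  Matrix.of fun u v => (localConn G u v : ℝ) / ((Fintype.card V).choose 2 : ℝ)

/-- Transmission of a vertex: `T(v) = (1/C(n,2)) Σ_w κ(v,w)`. -/
noncomputable def transmission (G : SimpleGraph V) (v : V) : ℝ :=
  (∑ w, (localConn G v w : ℝ)) / ((Fintype.card V).choose 2 : ℝ)

/-- Average connectivity `κ̄(G)`: average of `κ(u,v)` over unordered pairs, equivalently the
sum over ordered pairs divided by `n(n-1)`. -/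
noncomputable def avgConn (G : SimpleGraph V) : ℝ :=
  (∑ u, ∑ v, (localConn G u v : ℝ)) / ((Fintype.card V : ℝ) * ((Fintype.card V : ℝ) - 1))

/-- Matching number `α'(G)`: maximum number of edges in a matching. -/
noncomputable def matchingNumber (G : SimpleGraph V) : ℕ :=
  sSup {k | ∃ M : G.Subgraph, M.IsMatching ∧ M.edgeSet.ncard = k}

/-- Spectral radius of a real square matrix: supremum of absolute values of its
(real) eigenvalues. -/
noncomputable def specRad {n : Type*} [Fintype n] [DecidableEq n] (A : Matrix n n ℝ) : ℝ :=
  sSup {r : ℝ | ∃ μ : ℝ, Module.End.HasEigenvalue (Matrix.toLin' A) μ ∧ r = |μ|}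

/-- The join `G ∨ H` of two graphs: all edges of `G`, of `H`, and all edges between. -/
def graphJoin {α β : Type*} (G : SimpleGraph α) (H : SimpleGraph β) : SimpleGraph (α ⊕ β) where
  Adj x y :=
    match x, y with
    | Sum.inl a, Sum.inl a' => G.Adj a a'
    | Sum.inr b, Sum.inr b' => H.Adj b b'
    | _, _ => True
  symm := ⟨by rintro (a | b) (a' | b') h <;> simp_all <;> exact h.symm⟩
  loopless := ⟨by rintro (a | b) h <;> simp_all⟩

set_option linter.unusedSectionVars false

variable {G : SimpleGraph V}

noncomputable local instance (G : SimpleGraph V) : DecidableRel G.Adj := Classical.decRel _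

lemma idp_zero (G : SimpleGraph V) (u v : V) : InternallyDisjointPaths G u v 0 :=
  ⟨fun i => i.elim0, fun i => i.elim0, fun i => i.elim0, fun i => i.elim0⟩

/-- A walk whose support is `[u, v]` is the unique edge walk. -/
lemma walk_eq_of_support_pair {u v : V} (p q : G.Walk u v)
    (hp : p.support = [u, v]) (hq : q.support = [u, v]) : p = q := by
  have key : ∀ r : G.Walk u v, r.support = [u, v] → ∀ s : G.Walk u v, s.support = [u, v] → r = s := by
    intro r hr s hs
    cases r with
    | nil => simp at hr
    | cons hadj r' =>
      cases s with
      | nil => simp at hs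
      | cons hadj' s' =>
        rename_i x y
        simp only [SimpleGraph.Walk.support_cons] at hr hs
        have hx : x = v := by
          have := r'.support_eq_cons
          rw [List.cons.injEq] at hr
          rw [hr.2] at this; exact (List.cons.injEq _ _ _ _).mp this |>.1 |>.symm
        have hy : y = v := by
          have := s'.support_eq_cons
          rw [List.cons.injEq] at hs
          rw [hs.2] at this; exact (List.cons.injEq _ _ _ _).mp this |>.1 |>.symm
        subst hx hy
        have hr' : r' = SimpleGraph.Walk.nil := by
          cases r' with
          | nil => rfl
          | cons h t =>
            exfalso
            rw [List.cons.injEq] at hr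
            have := t.support_eq_cons
            rw [SimpleGraph.Walk.support_cons] at hr
            rw [List.cons.injEq] at hr
            exact absurd (hr.2.2.symm.trans this) (by simp [List.cons_ne_nil])
        have hs' : s' = SimpleGraph.Walk.nil := by
          cases s' with
          | nil => rfl
          | cons h t =>
            exfalso
            rw [List.cons.injEq] at hs
            have := t.support_eq_cons
            rw [SimpleGraph.Walk.support_cons] at hs
            rw [List.cons.injEq] at hs
            exact absurd (hs.2.2.symm.trans this) (by simp [List.cons_ne_nil])
        subst hr' hs'
        rfl
  exact key p hp q hq

/-- For a path from `u ≠ v`, there is a "second vertex": a neighbor of `u` on the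
support, distinct from `u`, and equal to `v` only if the walk is the edge walk. -/
lemma exists_sec {u v : V} (hne : u ≠ v) (p : G.Walk u v) (hp : p.IsPath) :
    ∃ x, G.Adj u x ∧ x ∈ p.support ∧ x ≠ u ∧ (x = v → p.support = [u, v]) := by
  have hsupp := p.support_eq_cons
  have hnodup := hp.support_nodup
  have hchain := p.isChain_adj_support
  have hlast := p.getLast_support
  cases htail : p.support.tail with
  | nil =>
    exfalso
    have hv := p.end_mem_support
    rw [hsupp, htail] at hv
    simp at hv
    exact hne hv.symm
  | cons x rest =>
    rw [htail] at hsupp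
    rw [hsupp] at hnodup hchain
    refine ⟨x, ?_, ?_, ?_, ?_⟩
    · exact (List.isChain_cons_cons.mp hchain).1
    · rw [hsupp]; simp
    · intro h; subst h
      exact (List.nodup_cons.mp hnodup).1 (List.mem_cons_self)
    · intro hxv
      cases rest with
      | nil => rw [hsupp, hxv]
      | cons y rest' =>
        exfalso
        have hsome : p.support.getLast? = some v := by
          rw [List.getLast?_eq_getLast_of_ne_nil p.support_ne_nil, p.getLast_support]
        rw [hsupp, List.getLast?_cons_cons, List.getLast?_cons_cons] at hsome
        have hvmem : v ∈ y :: rest' := by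
          obtain ⟨h, heq⟩ := List.mem_getLast?_eq_getLast hsome
          exact heq ▸ List.getLast_mem h
        rw [← hxv] at hvmem
        simp only [List.nodup_cons] at hnodup
        exact hnodup.2.1 hvmem



lemma idp_le_degree {u v : V} (hne : u ≠ v) {k : ℕ} (h : InternallyDisjointPaths G u v k) :
    k ≤ G.degree u := by
  classical
  obtain ⟨p, hinj, hpath, hdisj⟩ := h
  choose s hadj hmem hsne hsv using fun i => exists_sec hne (p i) (hpath i)
  have hsinj : Function.Injective fun i => (⟨s i, (SimpleGraph.mem_neighborSet _ _ _).mpr (hadj i)⟩ :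
      G.neighborSet u) := by
    intro i j hij
    simp only [Subtype.mk.injEq] at hij
    by_contra hne'
    have h2 : s i ∈ (p j).support := hij ▸ hmem j
    rcases hdisj i j hne' (s i) (hmem i) h2 with h | h
    · exact hsne i h
    · have e1 := hsv i h
      have e2 := hsv j (hij ▸ h)
      exact hne' (hinj (walk_eq_of_support_pair _ _ e1 e2))
  calc k = Fintype.card (Fin k) := (Fintype.card_fin k).symm
    _ ≤ Fintype.card (G.neighborSet u) := Fintype.card_le_of_injective _ hsinj
    _ = G.degree u := G.card_neighborSet_eq_degree u

lemma idp_self {k : ℕ} {u : V} (h : InternallyDisjointPaths G u u k) : k ≤ 1 := by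
  obtain ⟨p, hinj, hpath, -⟩ := h
  by_contra hk
  push_neg at hk
  have h0 : (⟨0, by omega⟩ : Fin k) ≠ ⟨1, hk⟩ := by
    intro h; exact absurd (congrArg Fin.val h) (by simp)
  have e0 := SimpleGraph.Walk.isPath_iff_eq_nil.mp (hpath ⟨0, by omega⟩)
  have e1 := SimpleGraph.Walk.isPath_iff_eq_nil.mp (hpath ⟨1, hk⟩)
  exact h0 (hinj (e0.trans e1.symm))

lemma bddAbove_idp (u v : V) : BddAbove {k | InternallyDisjointPaths G u v k} := by
  by_cases hne : u = v
  · subst hne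
    exact ⟨1, fun k hk => idp_self hk⟩
  · exact ⟨G.degree u, fun k hk => idp_le_degree hne hk⟩

lemma idp_reverse {u v : V} {k : ℕ} (h : InternallyDisjointPaths G u v k) :
    InternallyDisjointPaths G v u k := by
  obtain ⟨p, hinj, hpath, hdisj⟩ := h
  refine ⟨fun i => (p i).reverse, ?_, fun i => (hpath i).reverse, ?_⟩
  · intro i j hij
    apply hinj
    have := congrArg SimpleGraph.Walk.reverse hij
    simpa using this
  · intro i j hne w hwi hwj
    rw [SimpleGraph.Walk.support_reverse, List.mem_reverse] at hwi hwj
    rcases hdisj i j hne w hwi hwj with h | h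
    exacts [Or.inr h, Or.inl h]

lemma localConn_self (u : V) : localConn G u u = 0 := if_pos rfl

lemma localConn_le_degree (u v : V) : localConn G u v ≤ G.degree u := by
  rw [localConn]
  split_ifs with h
  · exact Nat.zero_le _
  · exact csSup_le ⟨0, idp_zero G u v⟩ fun k hk => idp_le_degree h hk

lemma localConn_le_degree' (u v : V) : localConn G u v ≤ G.degree v := by
  rw [localConn]
  split_ifs with h
  · exact Nat.zero_le _
  · exact csSup_le ⟨0, idp_zero G u v⟩ fun k hk =>
      idp_le_degree (Ne.symm h) (idp_reverse hk)

lemma one_le_localConn (hG : G.Connected) {u v : V} (hne : u ≠ v) :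
    1 ≤ localConn G u v := by
  rw [localConn, if_neg hne]
  apply le_csSup (bddAbove_idp u v)
  obtain ⟨q, hq⟩ : ∃ q : G.Walk u v, q.IsPath := by
    obtain ⟨w⟩ := hG.preconnected u v
    exact ⟨w.toPath.1, w.toPath.2⟩
  exact (⟨fun _ => q, fun i j _ => Subsingleton.elim i j, fun _ => hq,
    fun i j hij => absurd (Subsingleton.elim i j) hij⟩ : InternallyDisjointPaths G u v 1)

lemma localConn_le_cut {u v : V} (hne : u ≠ v) (S : Finset V) (hu : u ∉ S) (hv : v ∉ S)
    (hcut : ∀ q : G.Walk u v, q.IsPath → (∀ x ∈ q.support, x ∉ S) → q.support = [u, v]) :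
    localConn G u v ≤ S.card + 1 := by
  classical
  rw [localConn, if_neg hne]
  have h0 : (0:ℕ) ∈ {k | InternallyDisjointPaths G u v k} := idp_zero G u v
  apply csSup_le ⟨0, h0⟩
  rintro k ⟨p, hinj, hpath, hdisj⟩
  let T : Finset (Fin k) := Finset.univ.filter fun i => ∃ x ∈ (p i).support, x ∈ S
  let g : Fin k → V := fun i =>
    if h : ∃ x ∈ (p i).support, x ∈ S then h.choose else u
  have hg : ∀ i ∈ T, g i ∈ (p i).support ∧ g i ∈ S := by
    intro i hi
    rw [Finset.mem_filter] at hi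
    have h := hi.2
    simp only [g, dif_pos h]
    exact ⟨h.choose_spec.1, h.choose_spec.2⟩
  have hTcard : T.card ≤ S.card := by
    apply Finset.card_le_card_of_injOn g (fun i hi => (hg i hi).2)
    intro i hi j hj hij
    by_contra hne'
    have h1 := hg i hi
    have h2 := hg j hj
    rcases hdisj i j hne' (g i) h1.1 (hij ▸ h2.1) with h | h
    · exact hu (h ▸ h1.2)
    · exact hv (h ▸ h1.2)
  have hTc : Tᶜ.card ≤ 1 := by
    rw [Finset.card_le_one]
    intro i hi j hj
    simp only [T, Finset.mem_compl, Finset.mem_filter, Finset.mem_univ, true_and] at hi hj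
    push_neg at hi hj
    have ei := hcut (p i) (hpath i) hi
    have ej := hcut (p j) (hpath j) hj
    exact hinj (walk_eq_of_support_pair _ _ ei ej)
  calc k = Fintype.card (Fin k) := (Fintype.card_fin k).symm
    _ = T.card + Tᶜ.card := (Finset.card_add_card_compl T).symm
    _ ≤ S.card + 1 := Nat.add_le_add hTcard hTc

/-! ### Matchings -/

lemma matching_bddAbove :
    BddAbove {k | ∃ M : G.Subgraph, M.IsMatching ∧ M.edgeSet.ncard = k} := by
  refine ⟨Fintype.card (Sym2 V), ?_⟩
  rintro k ⟨M, -, rfl⟩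
  calc M.edgeSet.ncard ≤ (Set.univ : Set (Sym2 V)).ncard :=
        Set.ncard_le_ncard (Set.subset_univ _) Set.finite_univ
    _ = Fintype.card (Sym2 V) := by rw [Set.ncard_univ, Nat.card_eq_fintype_card]

lemma matching_zero_mem (G : SimpleGraph V) :
    (0:ℕ) ∈ {k | ∃ M : G.Subgraph, M.IsMatching ∧ M.edgeSet.ncard = k} := by
  refine ⟨⊥, fun v hv => absurd hv ?_, by simp [SimpleGraph.Subgraph.edgeSet_bot]⟩
  simp [SimpleGraph.Subgraph.verts_bot]

lemma exists_max_matching (G : SimpleGraph V) :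
    ∃ M : G.Subgraph, M.IsMatching ∧ M.edgeSet.ncard = matchingNumber G :=
  Nat.sSup_mem ⟨0, matching_zero_mem G⟩ matching_bddAbove

lemma le_matchingNumber {M : G.Subgraph} (hM : M.IsMatching) :
    M.edgeSet.ncard ≤ matchingNumber G :=
  le_csSup matching_bddAbove ⟨M, hM, rfl⟩

section MaxMatching

variable {M : G.Subgraph} (hM : M.IsMatching)

open scoped Classical in
/-- The partner of a matched vertex. -/
noncomputable def partner (hM : M.IsMatching) (v : V) : V :=
  if h : v ∈ M.verts then (hM h).choose else v

lemma partner_adj {v : V} (hv : v ∈ M.verts) : M.Adj v (partner hM v) := by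
  rw [partner]; rw [dif_pos hv]; exact (hM hv).choose_spec.1

lemma partner_eq {v w : V} (hvw : M.Adj v w) : partner hM v = w := by
  have hv : v ∈ M.verts := hvw.fst_mem
  rw [partner]; rw [dif_pos hv]
  exact ((hM hv).choose_spec.2 w hvw).symm

lemma partner_mem {v : V} (hv : v ∈ M.verts) : partner hM v ∈ M.verts :=
  (partner_adj hM hv).snd_mem

lemma partner_invol {v : V} (hv : v ∈ M.verts) : partner hM (partner hM v) = v :=
  partner_eq hM (partner_adj hM hv).symm

lemma partner_ne {v : V} (hv : v ∈ M.verts) : partner hM v ≠ v :=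
  (partner_adj hM hv).ne.symm

open scoped Classical in
lemma card_verts_le_twice (hM : M.IsMatching) :
    M.verts.toFinset.card ≤ 2 * M.edgeSet.ncard := by
  have key := Finset.card_le_mul_card_image (f := fun v => s(v, partner hM v))
    M.verts.toFinset 2 ?_
  · refine key.trans (Nat.mul_le_mul_left 2 ?_)
    rw [Set.ncard_eq_toFinset_card']
    apply Finset.card_le_card
    intro e he
    rw [Finset.mem_image] at he
    obtain ⟨v, hv, rfl⟩ := he
    rw [Set.mem_toFinset] at hv
    rw [Set.mem_toFinset]
    exact (partner_adj hM hv)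
  · intro e he
    induction e using Sym2.ind with
    | _ x y =>
      have hsub : M.verts.toFinset.filter (fun v => s(v, partner hM v) = s(x,y)) ⊆
          ({x, y} : Finset V) := by
        intro v hv
        rw [Finset.mem_filter] at hv
        have := Sym2.eq_iff.mp hv.2
        rw [Finset.mem_insert, Finset.mem_singleton]
        rcases this with ⟨h1, -⟩ | ⟨h2, -⟩
        · exact Or.inl h1
        · exact Or.inr h2
      calc (M.verts.toFinset.filter _).card ≤ ({x,y} : Finset V).card :=
            Finset.card_le_card hsub
        _ ≤ 2 := (Finset.card_insert_le _ _).trans (by simp)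
end MaxMatching

section Aug

variable {M : G.Subgraph}

lemma no_aug1 (hM : M.IsMatching)
    (hmax : ∀ M' : G.Subgraph, M'.IsMatching → M'.edgeSet.ncard ≤ M.edgeSet.ncard)
    {x y : V} (hx : x ∉ M.verts) (hy : y ∉ M.verts) (hadj : G.Adj x y) : False := by
  have hd : Disjoint M.support (G.subgraphOfAdj hadj).support := by
    rw [hM.support_eq_verts, Set.disjoint_left]
    intro a ha hmem
    have := (G.subgraphOfAdj hadj).support_subset_verts hmem
    rw [SimpleGraph.subgraphOfAdj_verts] at this
    rcases this with rfl | rfl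
    exacts [hx ha, hy ha]
  have hM' : (M ⊔ G.subgraphOfAdj hadj).IsMatching :=
    hM.sup (SimpleGraph.Subgraph.IsMatching.subgraphOfAdj hadj) hd
  have hnotmem : s(x, y) ∉ M.edgeSet := by
    intro h
    rw [SimpleGraph.Subgraph.mem_edgeSet] at h
    exact hx h.fst_mem
  have hcard : (M ⊔ G.subgraphOfAdj hadj).edgeSet.ncard = M.edgeSet.ncard + 1 := by
    rw [SimpleGraph.Subgraph.edgeSet_sup, SimpleGraph.edgeSet_subgraphOfAdj,
      Set.union_singleton, Set.ncard_insert_of_notMem hnotmem (Set.toFinite _)]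
  have := hmax _ hM'
  omega

lemma delete_matching_edge_isMatching (hM : M.IsMatching) {x y : V} (hxy : M.Adj x y) :
    (M.deleteVerts {x, y}).IsMatching := by
  intro v hv
  rw [SimpleGraph.Subgraph.deleteVerts_verts, Set.mem_diff] at hv
  obtain ⟨hvM, hvxy⟩ := hv
  obtain ⟨w, hw, huniq⟩ := hM hvM
  have hwx : w ≠ x := by
    rintro rfl
    have : v = y := by
      obtain ⟨w', hw', huniq'⟩ := hM hw.snd_mem
      rw [huniq' v hw.symm, huniq' y hxy]
    exact hvxy (by simp [this])
  have hwy : w ≠ y := by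
    rintro rfl
    have : v = x := by
      obtain ⟨w', hw', huniq'⟩ := hM hw.snd_mem
      rw [huniq' v hw.symm, huniq' x hxy.symm]
    exact hvxy (by simp [this])
  refine ⟨w, ?_, ?_⟩
  · show (M.deleteVerts {x, y}).Adj v w
    rw [SimpleGraph.Subgraph.deleteVerts_adj]
    refine ⟨hvM, ?_, hw.snd_mem, ?_, hw⟩
    · simpa using hvxy
    · simp [hwx, hwy]
  · intro w' hw'
    have hw'' : (M.deleteVerts {x, y}).Adj v w' := hw'
    rw [SimpleGraph.Subgraph.deleteVerts_adj] at hw''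
    exact huniq w' hw''.2.2.2.2

lemma delete_matching_edge_edgeSet (hM : M.IsMatching) {x y : V} (hxy : M.Adj x y) :
    (M.deleteVerts {x, y}).edgeSet = M.edgeSet \ {s(x, y)} := by
  ext e
  induction e using Sym2.ind with
  | _ a b =>
    simp only [SimpleGraph.Subgraph.mem_edgeSet, SimpleGraph.Subgraph.deleteVerts_adj,
      Set.mem_diff, Set.mem_singleton_iff, Set.mem_insert_iff, Set.mem_singleton_iff]
    constructor
    · rintro ⟨haM, hax, hbM, hbx, hab⟩
      push_neg at hax hbx
      refine ⟨hab, ?_⟩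
      intro h
      rcases Sym2.eq_iff.mp h with ⟨rfl, rfl⟩ | ⟨rfl, rfl⟩
      · exact hax.1 rfl
      · exact hax.2 rfl
    · rintro ⟨hab, hne⟩
      have hpx : ∀ c, M.Adj x c → c = y := by
        intro c hc
        rw [← partner_eq hM hc]
        exact partner_eq hM hxy
      have hpy : ∀ c, M.Adj y c → c = x := by
        intro c hc
        rw [← partner_eq hM hc]
        exact partner_eq hM hxy.symm
      refine ⟨hab.fst_mem, ?_, hab.snd_mem, ?_, hab⟩
      · rintro (rfl | rfl)
        · exact hne (by rw [Sym2.eq_iff]; exact Or.inl ⟨rfl, hpx b hab⟩)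
        · exact hne (by rw [Sym2.eq_iff]; exact Or.inr ⟨rfl, hpy b hab⟩)
      · rintro (rfl | rfl)
        · exact hne (by rw [Sym2.eq_iff]; exact Or.inr ⟨hpx a hab.symm, rfl⟩)
        · exact hne (by rw [Sym2.eq_iff]; exact Or.inl ⟨hpy a hab.symm, rfl⟩)

lemma no_aug2 (hM : M.IsMatching)
    (hmax : ∀ M' : G.Subgraph, M'.IsMatching → M'.edgeSet.ncard ≤ M.edgeSet.ncard)
    {x y i j : V} (hxy : M.Adj x y) (hi : i ∉ M.verts) (hj : j ∉ M.verts) (hij : i ≠ j)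
    (hxi : G.Adj x i) (hyj : G.Adj y j) : False := by
  have hxMem : x ∈ M.verts := hxy.fst_mem
  have hyMem : y ∈ M.verts := hxy.snd_mem
  have hxyne : x ≠ y := hxy.ne
  set M₀ := M.deleteVerts {x, y} with hM₀def
  have hM₀ : M₀.IsMatching := delete_matching_edge_isMatching hM hxy
  have hM₀verts : M₀.verts = M.verts \ {x, y} := SimpleGraph.Subgraph.deleteVerts_verts
  -- first sup
  have hd1 : Disjoint M₀.support (G.subgraphOfAdj hxi).support := by
    rw [hM₀.support_eq_verts, Set.disjoint_left, hM₀verts]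
    intro a ha hmem
    have := (G.subgraphOfAdj hxi).support_subset_verts hmem
    rw [SimpleGraph.subgraphOfAdj_verts] at this
    rcases this with rfl | rfl
    · exact ha.2 (by simp)
    · exact hi ha.1
  set M₁ := M₀ ⊔ G.subgraphOfAdj hxi with hM₁def
  have hM₁ : M₁.IsMatching := hM₀.sup (SimpleGraph.Subgraph.IsMatching.subgraphOfAdj hxi) hd1
  have hd2 : Disjoint M₁.support (G.subgraphOfAdj hyj).support := by
    rw [hM₁.support_eq_verts, Set.disjoint_left]
    intro a ha hmem
    have h2 := (G.subgraphOfAdj hyj).support_subset_verts hmem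
    rw [SimpleGraph.subgraphOfAdj_verts] at h2
    have h1 : a ∈ M₀.verts ∪ {x, i} := by
      have : M₁.verts = M₀.verts ∪ {x, i} := by
        rw [hM₁def]; rfl
      rw [← this]; exact ha
    rcases h2 with rfl | rfl
    · rcases h1 with h | h
      · rw [hM₀verts] at h; exact h.2 (by simp)
      · rcases h with h | h
        · exact hxyne h.symm
        · exact hi (h ▸ hyMem)
    · rcases h1 with h | h
      · rw [hM₀verts] at h; exact hj h.1
      · rcases h with h | h
        · exact hj (h ▸ hxMem)
        · exact hij (h.symm)
  set M₂ := M₁ ⊔ G.subgraphOfAdj hyj with hM₂def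
  have hM₂ : M₂.IsMatching := hM₁.sup (SimpleGraph.Subgraph.IsMatching.subgraphOfAdj hyj) hd2
  -- edge counts
  have hE0 : M₀.edgeSet = M.edgeSet \ {s(x,y)} := delete_matching_edge_edgeSet hM hxy
  have hxyE : s(x,y) ∈ M.edgeSet := hxy
  have hc0 : M₀.edgeSet.ncard + 1 = M.edgeSet.ncard := by
    rw [hE0]; exact Set.ncard_diff_singleton_add_one hxyE (Set.toFinite _)
  have hxiE : s(x,i) ∉ M₀.edgeSet := by
    rw [hE0]
    rintro ⟨h, -⟩
    exact hi (SimpleGraph.Subgraph.mem_edgeSet.mp h).snd_mem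
  have hc1 : M₁.edgeSet.ncard = M₀.edgeSet.ncard + 1 := by
    rw [hM₁def, SimpleGraph.Subgraph.edgeSet_sup, SimpleGraph.edgeSet_subgraphOfAdj,
      Set.union_singleton, Set.ncard_insert_of_notMem hxiE (Set.toFinite _)]
  have hyjE : s(y,j) ∉ M₁.edgeSet := by
    rw [hM₁def, SimpleGraph.Subgraph.edgeSet_sup, SimpleGraph.edgeSet_subgraphOfAdj]
    rintro (h | h)
    · rw [hE0] at h
      exact hj (SimpleGraph.Subgraph.mem_edgeSet.mp h.1).snd_mem
    · rw [Set.mem_singleton_iff, Sym2.eq_iff] at h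
      rcases h with ⟨rfl, rfl⟩ | ⟨rfl, rfl⟩
      · exact hxyne rfl
      · exact hi hyMem
  have hc2 : M₂.edgeSet.ncard = M₁.edgeSet.ncard + 1 := by
    rw [hM₂def, SimpleGraph.Subgraph.edgeSet_sup, SimpleGraph.edgeSet_subgraphOfAdj,
      Set.union_singleton, Set.ncard_insert_of_notMem hyjE (Set.toFinite _)]
  have := hmax _ hM₂
  omega

end Aug

/-- Structure of a path between distinct vertices: it is the edge walk, or has a unique
internal vertex adjacent to both ends, or contains two adjacent internal vertices. -/
lemma walk_cases {u v : V} (hne : u ≠ v) (p : G.Walk u v) (hp : p.IsPath) :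
    p.support = [u, v] ∨
    (∃ x, G.Adj u x ∧ G.Adj x v ∧ x ≠ u ∧ x ≠ v ∧ x ∈ p.support) ∨
    (∃ x y, G.Adj x y ∧ x ≠ u ∧ x ≠ v ∧ y ≠ u ∧ y ≠ v ∧ x ∈ p.support ∧ y ∈ p.support) := by
  have hsupp := p.support_eq_cons
  have hnodup := hp.support_nodup
  have hchain := p.isChain_adj_support
  have hsome : p.support.getLast? = some v := by
    rw [List.getLast?_eq_getLast_of_ne_nil p.support_ne_nil, p.getLast_support]
  cases htail : p.support.tail with
  | nil =>
    exfalso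
    have hv := p.end_mem_support
    rw [hsupp, htail] at hv
    simp at hv
    exact hne hv.symm
  | cons x rest =>
    rw [htail] at hsupp
    rw [hsupp] at hnodup hchain hsome
    have hadjux : G.Adj u x := (List.isChain_cons_cons.mp hchain).1
    have hxu : x ≠ u := by
      rintro rfl
      exact (List.nodup_cons.mp hnodup).1 (List.mem_cons_self)
    cases rest with
    | nil =>
      left
      have : x = v := by
        rw [List.getLast?_cons_cons] at hsome
        simpa using hsome
      rw [hsupp, this]
    | cons y rest' =>
      have hnodup2 := (List.nodup_cons.mp hnodup).2
      have hxv : x ≠ v := by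
        rintro rfl
        rw [List.getLast?_cons_cons, List.getLast?_cons_cons] at hsome
        obtain ⟨h, heq⟩ := List.mem_getLast?_eq_getLast hsome
        exact (List.nodup_cons.mp hnodup2).1 (heq ▸ List.getLast_mem h)
      have hadjxy : G.Adj x y := (List.isChain_cons_cons.mp (List.isChain_cons_cons.mp hchain).2).1
      have hymem : y ∈ p.support := by rw [hsupp]; simp
      have hxmem : x ∈ p.support := by rw [hsupp]; simp
      have hyu : y ≠ u := by
        rintro rfl
        exact (List.nodup_cons.mp hnodup).1 (by simp)
      cases rest' with
      | nil =>
        right; left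
        have hyv : y = v := by
          rw [List.getLast?_cons_cons, List.getLast?_cons_cons] at hsome
          simpa using hsome
        exact ⟨x, hadjux, hyv ▸ hadjxy, hxu, hxv, hxmem⟩
      | cons z rest'' =>
        right; right
        have hyv : y ≠ v := by
          rintro rfl
          rw [List.getLast?_cons_cons, List.getLast?_cons_cons,
            List.getLast?_cons_cons] at hsome
          obtain ⟨h, heq⟩ := List.mem_getLast?_eq_getLast hsome
          exact (List.nodup_cons.mp (List.nodup_cons.mp hnodup2).2).1
            (heq ▸ List.getLast_mem h)
        exact ⟨x, y, hadjxy, hxu, hxv, hyu, hyv, hxmem, hymem⟩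

section Core

variable {M : G.Subgraph}

open scoped Classical

/-- If `v` is unmatched (w.r.t. a maximum matching), every neighbor is matched. -/
lemma unmatched_nbr_matched (hM : M.IsMatching)
    (hmax : ∀ M' : G.Subgraph, M'.IsMatching → M'.edgeSet.ncard ≤ M.edgeSet.ncard)
    {v w : V} (hv : v ∉ M.verts) (hadj : G.Adj v w) : w ∈ M.verts := by
  by_contra hw
  exact no_aug1 hM hmax hv hw hadj

lemma unmatched_degree_le (hM : M.IsMatching)
    (hmax : ∀ M' : G.Subgraph, M'.IsMatching → M'.edgeSet.ncard ≤ M.edgeSet.ncard)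
    {v : V} (hv : v ∉ M.verts) : G.degree v ≤ M.verts.toFinset.card := by
  rw [← SimpleGraph.card_neighborFinset_eq_degree]
  apply Finset.card_le_card
  intro w hw
  rw [SimpleGraph.mem_neighborFinset] at hw
  rw [Set.mem_toFinset]
  exact unmatched_nbr_matched hM hmax hv hw

/-- Cut bound for a pair of matched vertices. -/
lemma localConn_matched_pair (hM : M.IsMatching)
    (hmax : ∀ M' : G.Subgraph, M'.IsMatching → M'.edgeSet.ncard ≤ M.edgeSet.ncard)
    {v w : V} (hv : v ∈ M.verts) (hw : w ∈ M.verts) (hvw : v ≠ w) :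
    localConn G v w ≤ ((M.verts.toFinset.erase v).erase w).card
      + (Finset.univ.filter (fun i => i ∉ M.verts ∧ G.Adj v i ∧ G.Adj i w)).card + 1 := by
  set S := ((M.verts.toFinset.erase v).erase w) ∪
    (Finset.univ.filter (fun i => i ∉ M.verts ∧ G.Adj v i ∧ G.Adj i w)) with hS
  have hcard : S.card ≤ ((M.verts.toFinset.erase v).erase w).card
      + (Finset.univ.filter (fun i => i ∉ M.verts ∧ G.Adj v i ∧ G.Adj i w)).card :=
    Finset.card_union_le _ _
  have hvS : v ∉ S := by
    rw [hS, Finset.mem_union]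
    rintro (h | h)
    · exact (Finset.ne_of_mem_erase (Finset.mem_of_mem_erase h)) rfl
    · exact ((Finset.mem_filter.mp h).2.1) hv
  have hwS : w ∉ S := by
    rw [hS, Finset.mem_union]
    rintro (h | h)
    · exact (Finset.ne_of_mem_erase h) rfl
    · exact ((Finset.mem_filter.mp h).2.1) hw
  have hmemS : ∀ x, x ≠ v → x ≠ w → x ∈ M.verts → x ∈ S := by
    intro x hxv hxw hx
    rw [hS, Finset.mem_union]
    exact Or.inl (Finset.mem_erase.mpr ⟨hxw, Finset.mem_erase.mpr ⟨hxv, Set.mem_toFinset.mpr hx⟩⟩)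
  refine le_trans (localConn_le_cut hvw S hvS hwS ?_) (by omega)
  intro q hq havoid
  rcases walk_cases hvw q hq with h | ⟨x, hux, hxv, hxu, hxw, hxmem⟩ |
    ⟨x, y, hxy, hxu, hxv', hyu, hyv, hxmem, hymem⟩
  · exact h
  · exfalso
    have hxM : x ∉ M.verts := by
      intro hxM
      exact havoid x hxmem (hmemS x hxu hxw hxM)
    apply havoid x hxmem
    rw [hS, Finset.mem_union]
    exact Or.inr (Finset.mem_filter.mpr ⟨Finset.mem_univ _, hxM, hux, hxv⟩)
  · exfalso
    have hxM : x ∉ M.verts := fun hxM => havoid x hxmem (hmemS x hxu hxv' hxM)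
    have hyM : y ∉ M.verts := fun hyM => havoid y hymem (hmemS y hyu hyv hyM)
    exact no_aug1 hM hmax hxM hyM hxy

/-- Double counting: at most `m` edges leave each matched pair, so
`2 e(I,U) ≤ a m`. -/
lemma sum_unmatched_degree (hM : M.IsMatching)
    (hmax : ∀ M' : G.Subgraph, M'.IsMatching → M'.edgeSet.ncard ≤ M.edgeSet.ncard)
    (hm : 2 ≤ (M.verts.toFinsetᶜ : Finset V).card) :
    2 * ∑ w ∈ M.verts.toFinsetᶜ, G.degree w ≤
      M.verts.toFinset.card * (M.verts.toFinsetᶜ : Finset V).card := by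
  set Uf := M.verts.toFinset with hUf
  set Ic := (M.verts.toFinsetᶜ : Finset V) with hIc
  set dI : V → ℕ := fun u => (Ic.filter (fun i => G.Adj u i)).card with hdI
  have hIcmem : ∀ {i : V}, i ∈ Ic ↔ i ∉ M.verts := by
    intro i
    rw [hIc, Finset.mem_compl, Set.mem_toFinset]
  have hUfmem : ∀ {u : V}, u ∈ Uf ↔ u ∈ M.verts := by
    intro u; rw [hUf, Set.mem_toFinset]
  -- degrees of unmatched vertices count edges into Uf
  have hdeg : ∀ w ∈ Ic, G.degree w = (Uf.filter (fun u => G.Adj w u)).card := by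
    intro w hw
    rw [← SimpleGraph.card_neighborFinset_eq_degree]
    congr 1
    ext u
    rw [SimpleGraph.mem_neighborFinset, Finset.mem_filter]
    constructor
    · intro h
      exact ⟨hUfmem.mpr (unmatched_nbr_matched hM hmax (hIcmem.mp hw) h), h⟩
    · exact fun h => h.2
  -- swap the double sum
  have hswap : ∑ w ∈ Ic, G.degree w = ∑ u ∈ Uf, dI u := by
    calc ∑ w ∈ Ic, G.degree w = ∑ w ∈ Ic, ∑ u ∈ Uf, (if G.Adj w u then 1 else 0) := by
          refine Finset.sum_congr rfl fun w hw => ?_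
          rw [hdeg w hw, Finset.card_filter]
      _ = ∑ u ∈ Uf, ∑ w ∈ Ic, (if G.Adj w u then 1 else 0) := Finset.sum_comm
      _ = ∑ u ∈ Uf, dI u := by
          refine Finset.sum_congr rfl fun u hu => ?_
          show (∑ w ∈ Ic, if G.Adj w u then 1 else 0) = (Ic.filter (fun i => G.Adj u i)).card
          rw [Finset.card_filter]
          exact Finset.sum_congr rfl fun w hw => if_congr (G.adj_comm w u) rfl rfl
  -- pairing bound
  have hpair : ∀ u ∈ Uf, dI u + dI (partner hM u) ≤ Ic.card := by
    intro u hu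
    have huM : u ∈ M.verts := hUfmem.mp hu
    by_cases h1 : dI u = 0
    · have : dI (partner hM u) ≤ Ic.card := Finset.card_le_card (Finset.filter_subset _ _)
      omega
    · by_cases h2 : dI (partner hM u) = 0
      · have : dI u ≤ Ic.card := Finset.card_le_card (Finset.filter_subset _ _)
        omega
      · -- both nonempty: each has exactly one element, and they coincide
        obtain ⟨i, hi⟩ := Finset.card_pos.mp (Nat.pos_of_ne_zero h1)
        obtain ⟨j, hj⟩ := Finset.card_pos.mp (Nat.pos_of_ne_zero h2)
        rw [Finset.mem_filter] at hi hj
        have key : ∀ i' ∈ Ic.filter (fun i => G.Adj u i),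
            ∀ j' ∈ Ic.filter (fun i => G.Adj (partner hM u) i), i' = j' := by
          intro i' hi' j' hj'
          rw [Finset.mem_filter] at hi' hj'
          by_contra hne
          exact no_aug2 hM hmax (partner_adj hM huM) (hIcmem.mp hi'.1) (hIcmem.mp hj'.1)
            hne hi'.2 hj'.2
        have hcard1 : dI u ≤ 1 := by
          apply Finset.card_le_one.mpr
          intro i1 hi1 i2 hi2
          rw [key i1 hi1 j (Finset.mem_filter.mpr hj), key i2 hi2 j (Finset.mem_filter.mpr hj)]
        have hcard2 : dI (partner hM u) ≤ 1 := by
          apply Finset.card_le_one.mpr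
          intro j1 hj1 j2 hj2
          rw [← key i (Finset.mem_filter.mpr hi) j1 hj1, ← key i (Finset.mem_filter.mpr hi) j2 hj2]
        omega
  -- partner is an involution on Uf
  have hinvsum : ∑ u ∈ Uf, dI (partner hM u) = ∑ u ∈ Uf, dI u := by
    apply Finset.sum_nbij' (i := fun u => partner hM u) (j := fun u => partner hM u)
    · intro u hu; exact hUfmem.mpr (partner_mem hM (hUfmem.mp hu))
    · intro u hu; exact hUfmem.mpr (partner_mem hM (hUfmem.mp hu))
    · intro u hu; exact partner_invol hM (hUfmem.mp hu)
    · intro u hu; exact partner_invol hM (hUfmem.mp hu)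
    · intro u hu; rfl
  calc 2 * ∑ w ∈ Ic, G.degree w = ∑ u ∈ Uf, dI u + ∑ u ∈ Uf, dI (partner hM u) := by
        rw [hinvsum, hswap]; ring
    _ = ∑ u ∈ Uf, (dI u + dI (partner hM u)) := (Finset.sum_add_distrib).symm
    _ ≤ ∑ _u ∈ Uf, Ic.card := Finset.sum_le_sum hpair
    _ = Uf.card * Ic.card := by rw [Finset.sum_const, smul_eq_mul]

lemma degree_le_pred (v : V) : G.degree v ≤ Fintype.card V - 1 := by
  have := G.degree_lt_card_verts v
  omega

lemma rowsum_matched (hM : M.IsMatching)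
    (hmax : ∀ M' : G.Subgraph, M'.IsMatching → M'.edgeSet.ncard ≤ M.edgeSet.ncard)
    {v : V} (hv : v ∈ M.verts)
    (hsmall : M.verts.toFinset.card + 2 ≤ Fintype.card V) :
    ∑ w, localConn G v w + (M.verts.toFinset.card - 1) ≤
      M.verts.toFinset.card * (Fintype.card V - 1) := by
  set Uf := M.verts.toFinset with hUf
  set Ic := (M.verts.toFinsetᶜ : Finset V) with hIc
  set a := Uf.card with ha
  set m := Ic.card with hm
  set n := Fintype.card V with hn
  have hnam : a + m = n := Finset.card_add_card_compl Uf
  have hm2 : 2 ≤ m := by omega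
  have hvUf : v ∈ Uf := Set.mem_toFinset.mpr hv
  have ha2 : 2 ≤ a := by
    have hp : partner hM v ∈ Uf := Set.mem_toFinset.mpr (partner_mem hM hv)
    have hne : partner hM v ≠ v := partner_ne hM hv
    exact Finset.one_lt_card.mpr ⟨v, hvUf, partner hM v, hp, hne.symm⟩
  set e := ∑ w ∈ Ic, G.degree w with he
  -- sum over unmatched vertices
  have hb1 : ∑ w ∈ Ic, localConn G v w ≤ e :=
    Finset.sum_le_sum fun w _ => localConn_le_degree' v w
  -- sum over matched vertices
  set cnt : V → ℕ := fun w =>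
    (Finset.univ.filter (fun i => i ∉ M.verts ∧ G.Adj v i ∧ G.Adj i w)).card with hcnt
  have hb2 : ∀ w ∈ Uf.erase v, localConn G v w ≤ (a - 1) + cnt w := by
    intro w hw
    have hwUf := Finset.mem_of_mem_erase hw
    have hwv : w ≠ v := Finset.ne_of_mem_erase hw
    have hkey := localConn_matched_pair hM hmax hv (Set.mem_toFinset.mp hwUf) hwv.symm
    have hcarde : ((Uf.erase v).erase w).card = a - 2 := by
      rw [Finset.card_erase_of_mem (Finset.mem_erase.mpr ⟨hwv, hwUf⟩),
        Finset.card_erase_of_mem hvUf]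
      omega
    rw [hcarde] at hkey
    have hcntw : cnt w =
        (Finset.univ.filter (fun i => i ∉ M.verts ∧ G.Adj v i ∧ G.Adj i w)).card := rfl
    omega
  set X := ∑ w ∈ Uf.erase v, cnt w with hX
  have hXe : X ≤ e := by
    have hswap : X = ∑ i, ∑ w ∈ Uf.erase v,
        (if i ∉ M.verts ∧ G.Adj v i ∧ G.Adj i w then 1 else 0) := by
      rw [hX]
      rw [Finset.sum_comm]
      exact Finset.sum_congr rfl fun w _ => by rw [hcnt]; exact Finset.card_filter _ _
    rw [hswap]
    have hper : ∀ i : V, (∑ w ∈ Uf.erase v,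
        (if i ∉ M.verts ∧ G.Adj v i ∧ G.Adj i w then 1 else 0)) ≤
        (if i ∉ M.verts then G.degree i else 0) := by
      intro i
      by_cases hiM : i ∉ M.verts
      · rw [if_pos hiM]
        calc (∑ w ∈ Uf.erase v, (if i ∉ M.verts ∧ G.Adj v i ∧ G.Adj i w then 1 else 0))
            ≤ ∑ w ∈ Uf.erase v, (if G.Adj i w then 1 else 0) := by
              refine Finset.sum_le_sum fun w _ => ?_
              split_ifs with h1 h2
              · rfl
              · exact absurd h1.2.2 h2
              · omega
              · rfl
          _ = ((Uf.erase v).filter (fun w => G.Adj i w)).card := (Finset.card_filter _ _).symm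
          _ ≤ G.degree i := by
              rw [← SimpleGraph.card_neighborFinset_eq_degree]
              apply Finset.card_le_card
              intro w hw
              rw [Finset.mem_filter] at hw
              rw [SimpleGraph.mem_neighborFinset]
              exact hw.2
      · rw [if_neg hiM]
        apply Nat.le_of_eq
        apply Finset.sum_eq_zero
        intro w _
        rw [if_neg]
        tauto
    calc (∑ i, ∑ w ∈ Uf.erase v, (if i ∉ M.verts ∧ G.Adj v i ∧ G.Adj i w then 1 else 0))
        ≤ ∑ i, (if i ∉ M.verts then G.degree i else 0) := Finset.sum_le_sum fun i _ => hper i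
      _ = ∑ i ∈ Finset.univ.filter (fun i => i ∉ M.verts), G.degree i :=
          (Finset.sum_filter _ _).symm
      _ = e := by
          rw [he]
          congr 1
          ext i
          rw [Finset.mem_filter, hIc, Finset.mem_compl, Set.mem_toFinset]
          simp
    -- end hXe
  have hUfsum : ∑ w ∈ Uf, localConn G v w ≤ (a - 1) * (a - 1) + X := by
    have hsplit : ∑ w ∈ Uf.erase v, localConn G v w + localConn G v v =
        ∑ w ∈ Uf, localConn G v w := Finset.sum_erase_add Uf _ hvUf
    rw [localConn_self] at hsplit
    rw [← hsplit, Nat.add_zero]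
    calc ∑ w ∈ Uf.erase v, localConn G v w ≤ ∑ w ∈ Uf.erase v, ((a - 1) + cnt w) :=
          Finset.sum_le_sum hb2
      _ = (Uf.erase v).card * (a - 1) + X := by
          rw [Finset.sum_add_distrib, Finset.sum_const, smul_eq_mul, hX]
      _ = (a - 1) * (a - 1) + X := by
          rw [Finset.card_erase_of_mem hvUf, Nat.mul_comm]
  have hsplitAll : ∑ w ∈ Uf, localConn G v w + ∑ w ∈ Ufᶜ, localConn G v w =
      ∑ w, localConn G v w := Finset.sum_add_sum_compl Uf _
  have hIcUfc : (Ufᶜ : Finset V) = Ic := rfl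
  rw [hIcUfc] at hsplitAll
  have h2e : 2 * e ≤ a * m := sum_unmatched_degree hM hmax hm2
  obtain ⟨b, hb⟩ : ∃ b, a = b + 1 := ⟨a - 1, by omega⟩
  have hsub1 : a - 1 = b := by omega
  have hsubn : n - 1 = b + m := by omega
  rw [hsub1, hsubn, hb]
  rw [hsub1] at hUfsum
  nlinarith [hb1, hXe, hUfsum, hsplitAll, h2e]

lemma rowsum_le_all (hM : M.IsMatching)
    (hmax : ∀ M' : G.Subgraph, M'.IsMatching → M'.edgeSet.ncard ≤ M.edgeSet.ncard)
    (hn2 : 2 ≤ Fintype.card V) (v : V) :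
    ∑ w, localConn G v w ≤ M.verts.toFinset.card * (Fintype.card V - 1) := by
  set n := Fintype.card V with hn
  set a := M.verts.toFinset.card with ha
  have hgen : ∀ b : ℕ, (∀ w, w ≠ v → localConn G v w ≤ b) →
      ∑ w, localConn G v w ≤ (n - 1) * b := by
    intro b hbnd
    have hsplit : ∑ w ∈ Finset.univ.erase v, localConn G v w + localConn G v v =
        ∑ w, localConn G v w := Finset.sum_erase_add _ _ (Finset.mem_univ v)
    rw [localConn_self] at hsplit
    rw [← hsplit, Nat.add_zero]
    calc ∑ w ∈ Finset.univ.erase v, localConn G v w ≤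
        ∑ _w ∈ Finset.univ.erase v, b :=
          Finset.sum_le_sum fun w hw => hbnd w (Finset.ne_of_mem_erase hw)
      _ = (n - 1) * b := by
          rw [Finset.sum_const, smul_eq_mul, Finset.card_erase_of_mem (Finset.mem_univ v),
            Finset.card_univ]
  by_cases hcase : n ≤ a + 1
  · have h1 : ∀ w, w ≠ v → localConn G v w ≤ n - 1 :=
      fun w _ => (localConn_le_degree v w).trans (degree_le_pred v)
    calc ∑ w, localConn G v w ≤ (n - 1) * (n - 1) := hgen _ h1
      _ ≤ a * (n - 1) := Nat.mul_le_mul_right _ (by omega)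
  · by_cases hv : v ∈ M.verts
    · have htmp := rowsum_matched hM hmax hv (by omega)
      rw [← ha, ← hn] at htmp
      omega
    · have h1 : ∀ w, w ≠ v → localConn G v w ≤ a :=
        fun w _ => (localConn_le_degree v w).trans (unmatched_degree_le hM hmax hv)
      calc ∑ w, localConn G v w ≤ (n - 1) * a := hgen _ h1
        _ = a * (n - 1) := Nat.mul_comm _ _

end Core

section Spectral

variable {ι : Type*} [Fintype ι] [DecidableEq ι]

lemma eigen_bound {A : Matrix ι ι ℝ} (hA : ∀ i j, 0 ≤ A i j) {t : ℝ}
    (hrow : ∀ i, ∑ j, A i j ≤ t) {μ : ℝ}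
    (hμ : Module.End.HasEigenvalue (Matrix.toLin' A) μ) : |μ| ≤ t := by
  obtain ⟨x, hx⟩ := hμ.exists_hasEigenvector
  have hxapp : A.mulVec x = μ • x := by
    have := hx.apply_eq_smul
    rwa [Matrix.toLin'_apply] at this
  obtain ⟨j0, hj0⟩ : ∃ j, x j ≠ 0 := by
    by_contra h
    push_neg at h
    exact hx.right (funext fun j => h j)
  obtain ⟨i0, -, hi0⟩ := Finset.exists_max_image Finset.univ (fun i => |x i|)
    ⟨j0, Finset.mem_univ j0⟩
  have hc : 0 < |x i0| := lt_of_lt_of_le (abs_pos.mpr hj0) (hi0 j0 (Finset.mem_univ j0))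
  have hchain : |μ| * |x i0| ≤ t * |x i0| := by
    calc |μ| * |x i0| = |μ * x i0| := (abs_mul μ (x i0)).symm
      _ = |(A.mulVec x) i0| := by rw [hxapp]; simp
      _ = |∑ j, A i0 j * x j| := by
          rw [Matrix.mulVec, dotProduct]
      _ ≤ ∑ j, |A i0 j * x j| := Finset.abs_sum_le_sum_abs _ _
      _ = ∑ j, A i0 j * |x j| := by
          refine Finset.sum_congr rfl fun j _ => ?_
          rw [abs_mul, abs_of_nonneg (hA i0 j)]
      _ ≤ ∑ j, A i0 j * |x i0| :=
          Finset.sum_le_sum fun j _ =>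
            mul_le_mul_of_nonneg_left (hi0 j (Finset.mem_univ j)) (hA i0 j)
      _ = (∑ j, A i0 j) * |x i0| := (Finset.sum_mul _ _ _).symm
      _ ≤ t * |x i0| := mul_le_mul_of_nonneg_right (hrow i0) (le_of_lt hc)
  exact le_of_mul_le_mul_right hchain hc

lemma specRad_le_of_rowsum {A : Matrix ι ι ℝ} (hA : ∀ i j, 0 ≤ A i j) {t : ℝ} (ht : 0 ≤ t)
    (hrow : ∀ i, ∑ j, A i j ≤ t) : specRad A ≤ t := by
  apply Real.sSup_le _ ht
  rintro r ⟨μ, hμ, rfl⟩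
  exact eigen_bound hA hrow hμ

lemma rowsum_eq_of_specRad_eq {A : Matrix ι ι ℝ} (hA : ∀ i j, 0 ≤ A i j)
    (hpos : ∀ i j, i ≠ j → 0 < A i j) {t : ℝ} (ht : 0 < t)
    (hrow : ∀ i, ∑ j, A i j ≤ t) (heq : specRad A = t) :
    ∀ i, ∑ j, A i j = t := by
  have hfin : {r : ℝ | ∃ μ : ℝ, Module.End.HasEigenvalue (Matrix.toLin' A) μ ∧ r = |μ|}.Finite := by
    apply ((Module.End.finite_hasEigenvalue (Matrix.toLin' A)).image (fun μ => |μ|)).subset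
    rintro r ⟨μ, hμ, rfl⟩
    exact ⟨μ, hμ, rfl⟩
  have hne : {r : ℝ | ∃ μ : ℝ, Module.End.HasEigenvalue (Matrix.toLin' A) μ ∧ r = |μ|}.Nonempty := by
    by_contra h
    rw [Set.not_nonempty_iff_eq_empty] at h
    rw [specRad, h, Real.sSup_empty] at heq
    linarith
  have hmem := hne.csSup_mem hfin
  rw [show sSup {r : ℝ | ∃ μ : ℝ, Module.End.HasEigenvalue (Matrix.toLin' A) μ ∧ r = |μ|}
    = specRad A from rfl, heq] at hmem
  obtain ⟨μ, hμ, hmabs⟩ := hmem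
  obtain ⟨x, hx⟩ := hμ.exists_hasEigenvector
  have hxapp : A.mulVec x = μ • x := by
    have := hx.apply_eq_smul
    rwa [Matrix.toLin'_apply] at this
  obtain ⟨j0, hj0⟩ : ∃ j, x j ≠ 0 := by
    by_contra h
    push_neg at h
    exact hx.right (funext fun j => h j)
  obtain ⟨i0, -, hi0⟩ := Finset.exists_max_image Finset.univ (fun i => |x i|)
    ⟨j0, Finset.mem_univ j0⟩
  have hc : 0 < |x i0| := lt_of_lt_of_le (abs_pos.mpr hj0) (hi0 j0 (Finset.mem_univ j0))
  have habs : ∀ i, |(A.mulVec x) i| = t * |x i| := by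
    intro i
    rw [hxapp]
    simp only [Pi.smul_apply, smul_eq_mul]
    rw [abs_mul, ← hmabs]
  have hup : ∀ i, |(A.mulVec x) i| ≤ ∑ j, A i j * |x j| := by
    intro i
    calc |(A.mulVec x) i| = |∑ j, A i j * x j| := by rw [Matrix.mulVec, dotProduct]
      _ ≤ ∑ j, |A i j * x j| := Finset.abs_sum_le_sum_abs _ _
      _ = ∑ j, A i j * |x j| := by
          refine Finset.sum_congr rfl fun j _ => ?_
          rw [abs_mul, abs_of_nonneg (hA i j)]
  -- squeeze at i0
  have h1 : ∑ j, A i0 j * |x j| = ∑ j, A i0 j * |x i0| := by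
    have hle : ∀ j ∈ Finset.univ, A i0 j * |x j| ≤ A i0 j * |x i0| :=
      fun j _ => mul_le_mul_of_nonneg_left (hi0 j (Finset.mem_univ j)) (hA i0 j)
    have hlow : t * |x i0| ≤ ∑ j, A i0 j * |x j| := (habs i0) ▸ hup i0
    have hupp : ∑ j, A i0 j * |x i0| ≤ t * |x i0| := by
      rw [← Finset.sum_mul]
      exact mul_le_mul_of_nonneg_right (hrow i0) (le_of_lt hc)
    exact le_antisymm (Finset.sum_le_sum hle) (hupp.trans hlow)
  have hconst : ∀ j, |x j| = |x i0| := by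
    intro j
    have := (Finset.sum_eq_sum_iff_of_le
      (fun j (_ : j ∈ Finset.univ) => mul_le_mul_of_nonneg_left (hi0 j (Finset.mem_univ j))
        (hA i0 j))).mp h1 j (Finset.mem_univ j)
    by_cases hji : j = i0
    · rw [hji]
    · have hApos := hpos i0 j (Ne.symm hji)
      exact mul_left_cancel₀ (ne_of_gt hApos) this
  intro i
  refine le_antisymm (hrow i) ?_
  have : t * |x i0| ≤ (∑ j, A i j) * |x i0| := by
    calc t * |x i0| = t * |x i| := by rw [hconst i]
      _ = |(A.mulVec x) i| := (habs i).symm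
      _ ≤ ∑ j, A i j * |x j| := hup i
      _ = ∑ j, A i j * |x i0| := Finset.sum_congr rfl fun j _ => by rw [hconst j]
      _ = (∑ j, A i j) * |x i0| := (Finset.sum_mul _ _ _).symm
  exact le_of_mul_le_mul_right this hc

end Spectral

lemma two_mul_choose_two (n : ℕ) : 2 * n.choose 2 = n * (n - 1) := by
  cases n with
  | zero => simp
  | succ k =>
    rw [Nat.choose_two_right, Nat.succ_sub_one]
    have hdvd : 2 ∣ (k + 1) * k := by
      rcases Nat.even_or_odd k with h | h
      · exact Dvd.dvd.mul_left (even_iff_two_dvd.mp h) _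
      · have : Even (k + 1) := Odd.add_one h
        exact Dvd.dvd.mul_right (even_iff_two_dvd.mp this) _
    exact Nat.mul_div_cancel' hdvd

lemma rowsum_trivial {G : SimpleGraph V} (v : V) :
    ∑ w, localConn G v w ≤ (Fintype.card V - 1) * (Fintype.card V - 1) := by
  classical
  have hsplit : ∑ w ∈ Finset.univ.erase v, localConn G v w + localConn G v v =
      ∑ w, localConn G v w := Finset.sum_erase_add _ _ (Finset.mem_univ v)
  rw [localConn_self] at hsplit
  rw [← hsplit, Nat.add_zero]
  calc ∑ w ∈ Finset.univ.erase v, localConn G v w ≤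
      ∑ _w ∈ Finset.univ.erase v, (Fintype.card V - 1) :=
        Finset.sum_le_sum fun w _ => (localConn_le_degree v w).trans (degree_le_pred v)
    _ = (Fintype.card V - 1) * (Fintype.card V - 1) := by
        rw [Finset.sum_const, smul_eq_mul, Finset.card_erase_of_mem (Finset.mem_univ v),
          Finset.card_univ]

lemma one_le_matchingNumber {G : SimpleGraph V} (hG : G.Connected)
    (hn2 : 2 ≤ Fintype.card V) : 1 ≤ matchingNumber G := by
  obtain ⟨u, v, huv⟩ := Fintype.exists_pair_of_one_lt_card (by omega : 1 < Fintype.card V)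
  obtain ⟨q, hq⟩ : ∃ q : G.Walk u v, q.IsPath := by
    obtain ⟨w⟩ := hG.preconnected u v
    exact ⟨w.toPath.1, w.toPath.2⟩
  obtain ⟨x, hux, -, -, -⟩ := exists_sec huv q hq
  have hmatch : (G.subgraphOfAdj hux).IsMatching :=
    SimpleGraph.Subgraph.IsMatching.subgraphOfAdj hux
  have hcard : (G.subgraphOfAdj hux).edgeSet.ncard = 1 := by
    rw [SimpleGraph.edgeSet_subgraphOfAdj, Set.ncard_singleton]
  calc 1 = (G.subgraphOfAdj hux).edgeSet.ncard := hcard.symm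
    _ ≤ matchingNumber G := le_matchingNumber hmatch

/-- For an `n`-vertex connected graph `G`, `ρ(A_κ̄(G)) ≤ 4α'(G)/n`; equality
holds only when `G` is a complete graph on an odd number of vertices. -/
theorem stmt9 (G : SimpleGraph V) (hG : G.Connected) :
    specRad (avgConnMatrix G) ≤ 4 * (matchingNumber G : ℝ) / (Fintype.card V : ℝ) ∧
      (specRad (avgConnMatrix G) = 4 * (matchingNumber G : ℝ) / (Fintype.card V : ℝ) →
        G = ⊤ ∧ Odd (Fintype.card V)) := by
  classical
  have : Nonempty V := hG.nonempty
  have hn1 : 1 ≤ Fintype.card V := Fintype.card_pos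
  by_cases hn2 : 2 ≤ Fintype.card V
  swap
  · -- one-vertex graph
    have hn : Fintype.card V = 1 := by omega
    have hsub : ∀ u v : V, u = v := fun u v => by
      have := Fintype.card_le_one_iff.mp (le_of_eq hn)
      exact this u v
    have hA0 : ∀ u v : V, avgConnMatrix G u v = 0 := by
      intro u v
      have h := hsub u v
      simp [avgConnMatrix, h, localConn_self]
    have hent : ∀ u v : V, (0:ℝ) ≤ avgConnMatrix G u v := fun u v => le_of_eq (hA0 u v).symm
    have hrow : ∀ u : V, ∑ w, avgConnMatrix G u w ≤ 0 := fun u =>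
      le_of_eq (Finset.sum_eq_zero fun w _ => hA0 u w)
    have hα0 : matchingNumber G = 0 := by
      have hle : matchingNumber G ≤ 0 := by
        apply csSup_le ⟨0, matching_zero_mem G⟩
        rintro k ⟨M, hMk, rfl⟩
        have : M.edgeSet = ∅ := by
          ext e
          induction e using Sym2.ind with
          | _ a b =>
            simp only [SimpleGraph.Subgraph.mem_edgeSet, Set.mem_empty_iff_false, iff_false]
            intro h
            exact h.ne (hsub a b)
        rw [this]
        simp
      omega
    have hsR : specRad (avgConnMatrix G) = 0 := by
      apply le_antisymm
      · exact specRad_le_of_rowsum hent le_rfl hrow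
      · exact Real.sSup_nonneg (by rintro r ⟨μ, hμ, rfl⟩; exact abs_nonneg μ)
    rw [hsR, hα0]
    refine ⟨by simp, fun _ => ⟨?_, hn ▸ odd_one⟩⟩
    ext u v
    simp only [SimpleGraph.top_adj]
    constructor
    · exact fun h => h.ne
    · exact fun h => absurd (hsub u v) h
  · -- main case
    obtain ⟨M, hM, hMc⟩ := exists_max_matching G
    have hmax : ∀ M' : G.Subgraph, M'.IsMatching → M'.edgeSet.ncard ≤ M.edgeSet.ncard :=
      fun M' h => hMc ▸ le_matchingNumber h
    have hα1 : 1 ≤ matchingNumber G := one_le_matchingNumber hG hn2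
    have haα : M.verts.toFinset.card ≤ 2 * matchingNumber G := by
      rw [← hMc]; exact card_verts_le_twice hM
    have hCpos : (0:ℝ) < ((Fintype.card V).choose 2 : ℝ) := by
      exact_mod_cast Nat.choose_pos hn2
    have hC2 : 2 * (Fintype.card V).choose 2 = Fintype.card V * (Fintype.card V - 1) :=
      two_mul_choose_two _
    have hCr : ((Fintype.card V).choose 2 : ℝ) =
        (Fintype.card V : ℝ) * ((Fintype.card V : ℝ) - 1) / 2 := by
      have := congrArg (fun k : ℕ => (k : ℝ)) hC2
      push_cast [Nat.cast_sub hn1] at this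
      linarith
    have hnR : (0:ℝ) < (Fintype.card V : ℝ) := by exact_mod_cast (by omega : 0 < Fintype.card V)
    -- the target value
    have htid : 4 * (matchingNumber G : ℝ) / (Fintype.card V : ℝ) *
        ((Fintype.card V).choose 2 : ℝ) =
        2 * (matchingNumber G : ℝ) * ((Fintype.card V : ℝ) - 1) := by
      rw [hCr]; field_simp; ring
    have hent : ∀ u v : V, (0:ℝ) ≤ avgConnMatrix G u v := by
      intro u v
      apply div_nonneg (Nat.cast_nonneg _) (le_of_lt hCpos)
    have hrowsumA : ∀ v : V, ∑ w, avgConnMatrix G v w =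
        ((∑ w, localConn G v w : ℕ) : ℝ) / ((Fintype.card V).choose 2 : ℝ) := by
      intro v
      rw [show (∑ w, avgConnMatrix G v w) =
        ∑ w, (localConn G v w : ℝ) / ((Fintype.card V).choose 2 : ℝ) from rfl,
        ← Finset.sum_div]
      norm_cast
    have hrowle : ∀ v : V, ∑ w, avgConnMatrix G v w ≤
        4 * (matchingNumber G : ℝ) / (Fintype.card V : ℝ) := by
      intro v
      rw [hrowsumA v, div_le_iff₀ hCpos, htid]
      have h1 : ∑ w, localConn G v w ≤ 2 * matchingNumber G * (Fintype.card V - 1) := by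
        calc ∑ w, localConn G v w ≤ M.verts.toFinset.card * (Fintype.card V - 1) :=
              rowsum_le_all hM hmax hn2 v
          _ ≤ 2 * matchingNumber G * (Fintype.card V - 1) :=
              Nat.mul_le_mul_right _ haα
      calc ((∑ w, localConn G v w : ℕ) : ℝ) ≤
          ((2 * matchingNumber G * (Fintype.card V - 1) : ℕ) : ℝ) := by exact_mod_cast h1
        _ = 2 * (matchingNumber G : ℝ) * ((Fintype.card V : ℝ) - 1) := by
            push_cast [Nat.cast_sub hn1]
            ring
    have htnn : (0:ℝ) ≤ 4 * (matchingNumber G : ℝ) / (Fintype.card V : ℝ) := by positivity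
    refine ⟨specRad_le_of_rowsum hent htnn hrowle, ?_⟩
    intro heq
    have htpos : (0:ℝ) < 4 * (matchingNumber G : ℝ) / (Fintype.card V : ℝ) := by
      have : (1:ℝ) ≤ (matchingNumber G : ℝ) := by exact_mod_cast hα1
      positivity
    have hpos : ∀ u w : V, u ≠ w → (0:ℝ) < avgConnMatrix G u w := by
      intro u w huw
      apply div_pos _ hCpos
      have := one_le_localConn hG huw
      exact_mod_cast (by omega : 0 < localConn G u w)
    have hroweq := rowsum_eq_of_specRad_eq hent hpos htpos hrowle heq
    -- integer row sums
    have hNatEq : ∀ v : V, ∑ w, localConn G v w =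
        2 * matchingNumber G * (Fintype.card V - 1) := by
      intro v
      have h := hroweq v
      rw [hrowsumA v, div_eq_iff (ne_of_gt hCpos), htid] at h
      have h2 : ((∑ w, localConn G v w : ℕ) : ℝ) =
          ((2 * matchingNumber G * (Fintype.card V - 1) : ℕ) : ℝ) := by
        rw [h]
        push_cast [Nat.cast_sub hn1]
        ring
      exact_mod_cast h2
    -- a = 2 α'
    obtain ⟨v0⟩ := ‹Nonempty V›
    have h2αa : 2 * matchingNumber G ≤ M.verts.toFinset.card := by
      have h1 := rowsum_le_all hM hmax hn2 v0
      rw [hNatEq v0] at h1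
      exact Nat.le_of_mul_le_mul_right h1 (by omega)
    have haeq : M.verts.toFinset.card = 2 * matchingNumber G := le_antisymm haα h2αa
    have ha2 : 2 ≤ M.verts.toFinset.card := by omega
    by_cases hsm : M.verts.toFinset.card + 2 ≤ Fintype.card V
    · exfalso
      obtain ⟨v, hv⟩ := Finset.card_pos.mp (by omega : 0 < M.verts.toFinset.card)
      have h1 := rowsum_matched hM hmax (Set.mem_toFinset.mp hv) hsm
      rw [hNatEq v, ← haeq] at h1
      omega
    · have han : M.verts.toFinset.card ≤ Fintype.card V := by
        calc M.verts.toFinset.card ≤ Finset.univ.card := Finset.card_le_univ _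
          _ = Fintype.card V := Finset.card_univ
      by_cases hna : Fintype.card V = M.verts.toFinset.card
      · exfalso
        have h1 := rowsum_trivial (G := G) v0
        rw [hNatEq v0, ← haeq, hna] at h1
        have h2 : M.verts.toFinset.card ≤ M.verts.toFinset.card - 1 :=
          Nat.le_of_mul_le_mul_right h1 (by omega)
        omega
      · have hna1 : Fintype.card V = M.verts.toFinset.card + 1 := by omega
        have hkappa : ∀ v w : V, v ≠ w → localConn G v w = Fintype.card V - 1 := by
          intro v w hvw
          by_contra hne
          have hle : ∀ w' : V, w' ≠ v → localConn G v w' ≤ Fintype.card V - 1 :=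
            fun w' _ => (localConn_le_degree v w').trans (degree_le_pred v)
          have hstrict : localConn G v w < Fintype.card V - 1 :=
            lt_of_le_of_ne (hle w (Ne.symm hvw)) hne
          have hsplit : ∑ w' ∈ Finset.univ.erase v, localConn G v w' + localConn G v v =
              ∑ w', localConn G v w' := Finset.sum_erase_add _ _ (Finset.mem_univ v)
          rw [localConn_self, Nat.add_zero] at hsplit
          have hlt : ∑ w' ∈ Finset.univ.erase v, localConn G v w' <
              ∑ _w' ∈ Finset.univ.erase v, (Fintype.card V - 1) := by
            apply Finset.sum_lt_sum
            · exact fun w' hw' => hle w' (Finset.ne_of_mem_erase hw')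
            · exact ⟨w, Finset.mem_erase.mpr ⟨Ne.symm hvw, Finset.mem_univ w⟩, hstrict⟩
          rw [Finset.sum_const, smul_eq_mul, Finset.card_erase_of_mem (Finset.mem_univ v),
            Finset.card_univ] at hlt
          rw [hsplit, hNatEq v, ← haeq] at hlt
          rw [show Fintype.card V - 1 = M.verts.toFinset.card from by omega] at hlt
          exact lt_irrefl _ hlt
        constructor
        · ext u w
          simp only [SimpleGraph.top_adj]
          constructor
          · exact fun h => h.ne
          · intro huw
            have hdeg : G.degree u = Fintype.card V - 1 := by
              refine le_antisymm (degree_le_pred u) ?_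
              rw [← hkappa u w huw]
              exact localConn_le_degree u w
            have hnbr : G.neighborFinset u = Finset.univ.erase u := by
              apply Finset.eq_of_subset_of_card_le
              · intro x hx
                rw [SimpleGraph.mem_neighborFinset] at hx
                exact Finset.mem_erase.mpr ⟨hx.ne', Finset.mem_univ x⟩
              · rw [Finset.card_erase_of_mem (Finset.mem_univ u), Finset.card_univ,
                  SimpleGraph.card_neighborFinset_eq_degree, hdeg]
            have : w ∈ G.neighborFinset u := by
              rw [hnbr]
              exact Finset.mem_erase.mpr ⟨Ne.symm huw, Finset.mem_univ w⟩
            rwa [SimpleGraph.mem_neighborFinset] at this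
        · exact ⟨matchingNumber G, by omega⟩

end AvgConn
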